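/- Let G be a finite simple graph on n vertices. Then θ(G) ≤ n − 1 if and only if for every pair of distinct vertices u and v of G one has N(v) \ {u} ≠ N(u) \ {v}, where N(w) denotes the set of neighbors of w. -/

import Mathlib

open SimpleGraph

def IsDistinguishing {V : Type*} {k : ℕ} (G : SimpleGraph V) (c : V → Fin k) : Prop :=
  ∀ α : G ≃g G, (∀ v, c (α v) = c v) → ∀ v, α v = v

noncomputable def Phi {V : Type*} (G : SimpleGraph V) (k : ℕ) : ℕ :=
  Nat.card (Quot (fun c₁ c₂ : {c : V → Fin k // IsDistinguishing G c} =>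
    ∃ α : G ≃g G, ∀ v, c₁.1 v = c₂.1 (α v)))

noncomputable def phi {V : Type*} (G : SimpleGraph V) (k : ℕ) : ℕ :=
  Nat.card (Quot (fun c₁ c₂ : {c : V → Fin k // IsDistinguishing G c ∧ Function.Surjective c} =>
    ∃ α : G ≃g G, ∀ v, c₁.1 v = c₂.1 (α v)))

noncomputable def theta {V : Type*} (G : SimpleGraph V) : ℕ :=
  sInf {t | ∀ k, t ≤ k → ∀ c : V → Fin k, Function.Surjective c → IsDistinguishing G c}

def stirling2 : ℕ → ℕ → ℕ
  | 0, 0 => 1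
  | 0, _ + 1 => 0
  | _ + 1, 0 => 0
  | n + 1, k + 1 => (k + 1) * stirling2 n (k + 1) + stirling2 n k

def IsDCPartition {V : Type*} [DecidableEq V] [Fintype V] (G : SimpleGraph V)
    (P : Finpartition (Finset.univ : Finset V)) : Prop :=
  ∀ α : G ≃g G, (∀ p ∈ P.parts, p.image ⇑α = p) → ∀ v, α v = v

def IsDPartition {V : Type*} [DecidableEq V] [Fintype V] (G : SimpleGraph V)
    (P : Finpartition (Finset.univ : Finset V)) : Prop :=
  ∀ α : G ≃g G, P.parts.image (fun p => p.image ⇑α) = P.parts → ∀ v, α v = v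

def PartEquiv {V : Type*} [DecidableEq V] [Fintype V] (G : SimpleGraph V)
    (P₁ P₂ : Finpartition (Finset.univ : Finset V)) : Prop :=
  ∃ α : G ≃g G, P₁.parts.image (fun p => p.image ⇑α) = P₂.parts

noncomputable def psi {V : Type*} [DecidableEq V] [Fintype V] (G : SimpleGraph V) (k : ℕ) : ℕ :=
  Nat.card (Quot (fun P₁ P₂ : {P : Finpartition (Finset.univ : Finset V) //
      IsDCPartition G P ∧ P.parts.card = k} => PartEquiv G P₁.1 P₂.1))

noncomputable def PsiAtMost {V : Type*} [DecidableEq V] [Fintype V] (G : SimpleGraph V) (k : ℕ) : ℕ :=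
  Nat.card (Quot (fun P₁ P₂ : {P : Finpartition (Finset.univ : Finset V) //
      IsDCPartition G P ∧ P.parts.card ≤ k} => PartEquiv G P₁.1 P₂.1))

noncomputable def PiAtMost {V : Type*} [DecidableEq V] [Fintype V] (G : SimpleGraph V) (k : ℕ) : ℕ :=
  Nat.card (Quot (fun P₁ P₂ : {P : Finpartition (Finset.univ : Finset V) //
      P.parts.card ≤ k} => PartEquiv G P₁.1 P₂.1))

noncomputable def XiAtMost {V : Type*} [DecidableEq V] [Fintype V] (G : SimpleGraph V) (k : ℕ) : ℕ :=
  Nat.card (Quot (fun P₁ P₂ : {P : Finpartition (Finset.univ : Finset V) //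
      IsDPartition G P ∧ P.parts.card ≤ k} => PartEquiv G P₁.1 P₂.1))

def kneserGraph2 (n : ℕ) : SimpleGraph {s : Finset (Fin n) // s.card = 2} where
  Adj a b := Disjoint a.1 b.1
  symm := ⟨fun a b h => h.symm⟩
  loopless := ⟨by
    rintro ⟨s, hs⟩ h
    simp only [disjoint_self, Finset.bot_eq_empty] at h
    simp [h] at hs⟩

def lexProd {V W : Type*} (X : SimpleGraph V) (Y : SimpleGraph W) : SimpleGraph (V × W) where
  Adj a b := X.Adj a.1 b.1 ∨ (a.1 = b.1 ∧ Y.Adj a.2 b.2)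
  symm := ⟨by
    rintro ⟨x, y⟩ ⟨x', y'⟩ (h | ⟨h, h'⟩)
    · exact Or.inl h.symm
    · exact Or.inr ⟨h.symm, h'.symm⟩⟩
  loopless := ⟨by
    rintro ⟨x, y⟩ (h | ⟨-, h⟩)
    · exact X.loopless.irrefl x h
    · exact Y.loopless.irrefl y h⟩

def IsNaturalAut {V W : Type*} (X : SimpleGraph V) (Y : SimpleGraph W)
    (μ : lexProd X Y ≃g lexProd X Y) : Prop :=
  ∀ x : V, ∃ x' : V, (fun p => μ p) '' ({x} ×ˢ (Set.univ : Set W)) = {x'} ×ˢ (Set.univ : Set W)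

noncomputable def distNumber {V : Type*} (G : SimpleGraph V) : ℕ :=
  sInf {k | ∃ c : V → Fin k, IsDistinguishing G c}

theorem theta_le_card_sub_one_iff (V : Type*) [Fintype V] (G : SimpleGraph V) :
    theta G ≤ Fintype.card V - 1 ↔
      ∀ u v : V, u ≠ v → G.neighborSet v \ {u} ≠ G.neighborSet u \ {v} := by
  classical
  set n := Fintype.card V with hn
  set S := {t | ∀ k, t ≤ k → ∀ c : V → Fin k, Function.Surjective c → IsDistinguishing G c}
    with hS
  have hnS : n ∈ S := by
    intro k hk c hcsurj
    have hkn : k ≤ n := by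
      simpa using Fintype.card_le_of_surjective c hcsurj
    have hcb : Function.Bijective c := by
      refine (Fintype.bijective_iff_surjective_and_card c).2 ⟨hcsurj, ?_⟩
      simp [le_antisymm hkn hk, hn]
    intro α hα v
    exact hcb.1 (hα v)
  have hmem : theta G ≤ n - 1 ↔ (n - 1) ∈ S := by
    constructor
    · intro h
      have h1 : theta G ∈ S := Nat.sInf_mem ⟨n, hnS⟩
      intro k hk
      exact h1 k (le_trans h hk)
    · intro h
      exact Nat.sInf_le h
  rw [hmem]
  constructor
  · -- forward
    intro h u v huv hNeq
    have hAdj : ∀ w, w ≠ u → w ≠ v → (G.Adj u w ↔ G.Adj v w) := by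
      intro w hwu hwv
      have := Set.ext_iff.1 hNeq w
      simp only [Set.mem_diff, mem_neighborSet, Set.mem_singleton_iff, hwu, hwv,
        not_false_iff, and_true] at this
      exact this.symm
    have key : ∀ a b, G.Adj a b → G.Adj (Equiv.swap u v a) (Equiv.swap u v b) := by
      intro a b hab
      rcases eq_or_ne a u with hau | hau
      · rw [hau, Equiv.swap_apply_left]
        rcases eq_or_ne b u with hbu | hbu
        · exact absurd (hau ▸ hbu ▸ hab) (G.loopless.irrefl _)
        · rcases eq_or_ne b v with hbv | hbv
          · rw [hbv, Equiv.swap_apply_right]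
            exact (hau ▸ hbv ▸ hab).symm
          · rw [Equiv.swap_apply_of_ne_of_ne hbu hbv]
            exact (hAdj b hbu hbv).1 (hau ▸ hab)
      · rcases eq_or_ne a v with hav | hav
        · rw [hav, Equiv.swap_apply_right]
          rcases eq_or_ne b u with hbu | hbu
          · rw [hbu, Equiv.swap_apply_left]
            exact (hav ▸ hbu ▸ hab).symm
          · rcases eq_or_ne b v with hbv | hbv
            · exact absurd (hav ▸ hbv ▸ hab) (G.loopless.irrefl _)
            · rw [Equiv.swap_apply_of_ne_of_ne hbu hbv]
              exact (hAdj b hbu hbv).2 (hav ▸ hab)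
        · rw [Equiv.swap_apply_of_ne_of_ne hau hav]
          rcases eq_or_ne b u with hbu | hbu
          · rw [hbu, Equiv.swap_apply_left]
            exact ((hAdj a hau hav).1 (hbu ▸ hab).symm).symm
          · rcases eq_or_ne b v with hbv | hbv
            · rw [hbv, Equiv.swap_apply_right]
              exact ((hAdj a hau hav).2 (hbv ▸ hab).symm).symm
            · rw [Equiv.swap_apply_of_ne_of_ne hbu hbv]
              exact hab
    have hswap : ∀ a b, G.Adj (Equiv.swap u v a) (Equiv.swap u v b) ↔ G.Adj a b := by
      intro a b
      constructor
      · intro hab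
        have := key _ _ hab
        simpa using this
      · exact key a b
    let σ : G ≃g G := ⟨Equiv.swap u v, hswap _ _⟩
    have hcard : Fintype.card {x : V // x ≠ v} = n - 1 := by
      simp [hn]
    let f : {x : V // x ≠ v} ≃ Fin (n - 1) := Fintype.equivFinOfCardEq hcard
    let c : V → Fin (n - 1) := fun x => if h : x = v then f ⟨u, huv⟩ else f ⟨x, h⟩
    have hcsurj : Function.Surjective c := by
      intro y
      obtain ⟨⟨x, hx⟩, hfx⟩ := f.surjective y
      exact ⟨x, by simp [c, hx, hfx]⟩
    have hcu : c u = c v := by simp [c, huv]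
    have hfix : ∀ x, c (σ x) = c x := by
      intro x
      rcases eq_or_ne x u with hxu | hxu
      · rw [hxu]
        show c (Equiv.swap u v u) = c u
        rw [Equiv.swap_apply_left]
        exact hcu.symm
      · rcases eq_or_ne x v with hxv | hxv
        · rw [hxv]
          show c (Equiv.swap u v v) = c v
          rw [Equiv.swap_apply_right]
          exact hcu
        · show c (Equiv.swap u v x) = c x
          rw [Equiv.swap_apply_of_ne_of_ne hxu hxv]
    have := h (n - 1) le_rfl c hcsurj σ hfix u
    have h2 : Equiv.swap u v u = u := this
    rw [Equiv.swap_apply_left] at h2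
    exact huv h2.symm
  · -- backward
    intro hN k hk c hcsurj α hα x
    by_cases hinj : Function.Injective c
    · exact hinj (hα x)
    · obtain ⟨u, v, hcuv, huv⟩ : ∃ u v, c u = c v ∧ u ≠ v := by
        simp only [Function.Injective, not_forall] at hinj
        obtain ⟨u, v, h1, h2⟩ := hinj
        exact ⟨u, v, h1, h2⟩
      have hklt : k < n := by
        simpa using Fintype.card_lt_of_surjective_not_injective c hcsurj hinj
      have hkeq : k = n - 1 := le_antisymm (by omega) hk
      have hcard : Fintype.card {x : V // x ≠ v} = k := by
        rw [hkeq]; simp [hn]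
      have hg : Function.Surjective (fun x : {x : V // x ≠ v} => c x) := by
        intro y
        obtain ⟨w, hw⟩ := hcsurj y
        rcases eq_or_ne w v with hwv | hwv
        · exact ⟨⟨u, huv⟩, by show c u = y; rw [hcuv, ← hwv]; exact hw⟩
        · exact ⟨⟨w, hwv⟩, hw⟩
      have hginj : Function.Injective (fun x : {x : V // x ≠ v} => c x) :=
        ((Fintype.bijective_iff_surjective_and_card _).2 ⟨hg, by simp [hcard]⟩).1
      have inj2 : ∀ a b : V, a ≠ v → b ≠ v → c a = c b → a = b := by
        intro a b ha hb hab
        exact Subtype.ext_iff.1 (hginj (a₁ := ⟨a, ha⟩) (a₂ := ⟨b, hb⟩) hab)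
      have hfib : ∀ w, c w = c u → w = u ∨ w = v := by
        intro w hw
        rcases eq_or_ne w v with hwv | hwv
        · exact Or.inr hwv
        · exact Or.inl (inj2 w u hwv huv hw)
      have hsingle : ∀ w, c w ≠ c u → α w = w := by
        intro w hw
        have h1 : c (α w) = c w := hα w
        have hwv : w ≠ v := by
          intro he
          exact hw (he ▸ hcuv.symm)
        have hαwv : α w ≠ v := by
          intro he
          rw [he] at h1
          exact hw (h1.symm.trans hcuv.symm)
        exact inj2 _ _ hαwv hwv h1
      rcases hfib (α u) (hα u) with hu | hu
      · -- α is identity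
        by_cases hx : c x = c u
        · rcases hfib x hx with h1 | h1
          · rw [h1]; exact hu
          · rw [h1]
            rcases hfib (α v) ((hα v).trans hcuv.symm) with h2 | h2
            · exact absurd (α.injective (h2.trans hu.symm)) huv.symm
            · exact h2
        · exact hsingle x hx
      · -- α swaps u and v: contradiction with hN
        exfalso
        have hαv : α v = u := by
          rcases hfib (α v) ((hα v).trans hcuv.symm) with h1 | h1
          · exact h1
          · exact absurd (α.injective (hu.trans h1.symm)) huv
        refine hN u v huv ?_
        ext w
        simp only [Set.mem_diff, mem_neighborSet, Set.mem_singleton_iff]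
        constructor
        · rintro ⟨hadj, hwu⟩
          have hwv : w ≠ v := fun he => G.loopless.irrefl v (he ▸ hadj)
          have hcw : c w ≠ c u := by
            intro hcwu
            rcases hfib w hcwu with h1 | h1
            · exact hwu h1
            · exact hwv h1
          have hαw : α w = w := hsingle w hcw
          have h2 := α.map_adj_iff.2 hadj
          rw [hαv, hαw] at h2
          exact ⟨h2, hwv⟩
        · rintro ⟨hadj, hwv⟩
          have hwu : w ≠ u := fun he => G.loopless.irrefl u (he ▸ hadj)
          have hcw : c w ≠ c u := by
            intro hcwu
            rcases hfib w hcwu with h1 | h1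
            · exact hwu h1
            · exact hwv h1
          have hαw : α w = w := hsingle w hcw
          have h2 := α.map_adj_iff.2 hadj
          rw [hu, hαw] at h2
          exact ⟨h2, hwu⟩
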